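/- Let α ∈ [0,1) and c > 0, so c_α = c^{1−α}/(α−1) < 0. Define L : ℝ → ℝ by L(x) = c_α·F(1 + x/c_α; 1−α) − c_α − x for x ≤ −c_α, and L(x) = 0 for x > −c_α, where F(z;b) = ∫₀^z 1/(1 + t^{1/b}) dt. Then L is differentiable at every x ∈ ℝ and L'(x) = s_{α,c}(x) − 1 for all x ∈ ℝ; i.e., L is the virtual SIGTRON-induced loss function for α ∈ [0,1). -/

import Mathlib

/-- `c_α = c^{1−α}/(α−1)` (real power). -/
noncomputable def cA (α c : ℝ) : ℝ := c ^ (1 - α) / (α - 1)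

/-- SIGTRON: extended asymmetric sigmoid with Perceptron. -/
noncomputable def sigtron (α c : ℝ) (x : ℝ) : ℝ :=
  if α = 1 then 1 / (1 + Real.exp (-x))
  else if α < 1 then
    if x ≤ -(cA α c) then 1 / (1 + (1 + x / cA α c) ^ ((1 : ℝ) / (1 - α))) else 1
  else
    if -(cA α c) < x then 1 / (1 + (1 + x / cA α c) ^ ((1 : ℝ) / (1 - α))) else 0

/-- `F(z;b) = ∫₀^z 1/(1 + t^{1/b}) dt`. -/
noncomputable def Fint (z b : ℝ) : ℝ := ∫ t in (0 : ℝ)..z, 1 / (1 + t ^ ((1 : ℝ) / b))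


/-- Virtual SIGTRON-induced loss for `α ∈ [0,1)`:
`L(x) = c_α·F(1+x/c_α; 1−α) − c_α − x` for `x ≤ −c_α`, and `L(x) = 0` otherwise. -/
noncomputable def lossLT (α c : ℝ) (x : ℝ) : ℝ :=
  if x ≤ -(cA α c) then cA α c * Fint (1 + x / cA α c) (1 - α) - cA α c - x else 0

lemma cA_neg {α c : ℝ} (hα : α ∈ Set.Ico (0 : ℝ) 1) (hc : 0 < c) : cA α c < 0 :=
  div_neg_of_pos_of_neg (Real.rpow_pos_of_pos hc _) (by linarith [hα.2])

/-- Derivative of the smooth branch `g(x) = c_α·F(1+x/c_α; 1−α) − c_α − x`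
at any `x` with `1 + x/c_α ≥ 0`. -/
lemma hasDerivAt_g {α c : ℝ} (hα : α ∈ Set.Ico (0 : ℝ) 1) (hc : 0 < c) {x : ℝ}
    (hz : 0 ≤ 1 + x / cA α c) :
    HasDerivAt (fun y => cA α c * Fint (1 + y / cA α c) (1 - α) - cA α c - y)
      (1 / (1 + (1 + x / cA α c) ^ ((1 : ℝ) / (1 - α))) - 1) x := by
  have hcα : cA α c < 0 := cA_neg hα hc
  have hcα' : cA α c ≠ 0 := ne_of_lt hcα
  set e : ℝ := (1 : ℝ) / (1 - α) with he
  have he0 : 0 < e := by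
    have : (0:ℝ) < 1 - α := by linarith [hα.2]
    positivity
  set f : ℝ → ℝ := fun t => 1 / (1 + t ^ e) with hf
  set z : ℝ := 1 + x / cA α c with hzdef
  -- continuity of `t ↦ t^e`
  have hrpow : Continuous fun t : ℝ => t ^ e := Real.continuous_rpow_const he0.le
  -- interval integrability on `[0, z]`
  have hint : IntervalIntegrable f MeasureTheory.volume 0 z := by
    apply ContinuousOn.intervalIntegrable
    apply ContinuousOn.div continuousOn_const
      (Continuous.continuousOn (by continuity))
    intro t ht
    rw [Set.uIcc_of_le hz] at ht
    have : (0:ℝ) ≤ t ^ e := Real.rpow_nonneg ht.1 e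
    positivity
  -- measurability
  have hmeas : StronglyMeasurableAtFilter f (nhds z) MeasureTheory.volume := by
    refine ⟨Set.univ, Filter.univ_mem, ?_⟩
    exact ((measurable_const.div ((measurable_const.add
      (hrpow.measurable)))).aestronglyMeasurable)
  -- continuity at `z`
  have hcont : ContinuousAt f z := by
    apply ContinuousAt.div continuousAt_const
      (continuousAt_const.add hrpow.continuousAt)
    have : (0:ℝ) ≤ z ^ e := Real.rpow_nonneg hz e
    show (1:ℝ) + z ^ e ≠ 0
    positivity
  have hF : HasDerivAt (fun u => Fint u (1 - α)) (f z) z := by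
    simpa [Fint, hf, he] using
      intervalIntegral.integral_hasDerivAt_right hint hmeas hcont
  have hinner : HasDerivAt (fun y : ℝ => 1 + y / cA α c) (1 / cA α c) x := by
    simpa using ((hasDerivAt_id x).div_const (cA α c)).const_add (1:ℝ)
  have hcomp := (hF.comp x hinner).const_mul (cA α c)
  have hder := ((hcomp.sub_const (cA α c)).sub (hasDerivAt_id x))
  have hden : 1 + z ^ e ≠ 0 := by
    have : (0:ℝ) ≤ z ^ e := Real.rpow_nonneg hz e
    positivity
  have heq : 1 / (1 + z ^ e) - 1 = cA α c * (f z * (1 / cA α c)) - 1 := by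
    simp only [hf]
    field_simp
  rw [heq]
  exact hder

/-- For `α ∈ [0,1)` and `c > 0`, the function `L = lossLT α c` is
differentiable at every `x ∈ ℝ` with `L'(x) = s_{α,c}(x) − 1`. -/
theorem sigtron_stmt13 (α c : ℝ) (hα : α ∈ Set.Ico (0 : ℝ) 1) (hc : 0 < c) (x : ℝ) :
    HasDerivAt (lossLT α c) (sigtron α c x - 1) x := by
  have hα1 : α ≠ 1 := ne_of_lt hα.2
  have hcα : cA α c < 0 := cA_neg hα hc
  have hcα' : cA α c ≠ 0 := ne_of_lt hcα
  have he0 : ((1:ℝ)/(1-α)) ≠ 0 := by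
    have : (0:ℝ) < 1 - α := by linarith [hα.2]
    positivity
  set g : ℝ → ℝ := fun y => cA α c * Fint (1 + y / cA α c) (1 - α) - cA α c - y with hg
  rcases lt_trichotomy x (-(cA α c)) with hx | hx | hx
  · -- interior of the first branch
    have hz : 0 ≤ 1 + x / cA α c := by
      have h1 : 1 + x / cA α c = (cA α c + x) / cA α c := by field_simp
      rw [h1]
      exact div_nonneg_iff.mpr (Or.inr ⟨by linarith, hcα.le⟩)
    have hgd := hasDerivAt_g hα hc hz
    have hs : sigtron α c x = 1 / (1 + (1 + x / cA α c) ^ ((1 : ℝ) / (1 - α))) := by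
      simp [sigtron, hα1, hα.2, le_of_lt hx]
    rw [hs]
    apply hgd.congr_of_eventuallyEq
    filter_upwards [Iio_mem_nhds hx] with y hy
    simp only [lossLT]
    rw [if_pos (Set.mem_Iio.mp hy).le]
  · -- boundary point
    subst hx
    set x0 : ℝ := -(cA α c) with hx0
    have hz0 : 1 + x0 / cA α c = 0 := by
      rw [hx0, neg_div, div_self hcα']
      ring
    have hL0 : lossLT α c x0 = 0 := by
      simp [lossLT, hz0, Fint, intervalIntegral.integral_same]
      intro _; rw [hx0]; ring
    have hg0 : g x0 = 0 := by
      simp only [hg, hz0, Fint, intervalIntegral.integral_same]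
      ring
    have hs : sigtron α c x0 - 1 = 0 := by
      simp only [sigtron, if_neg hα1, if_pos hα.2, if_pos le_rfl, hz0, Real.zero_rpow he0]
      norm_num
    rw [hs]
    have hgd : HasDerivAt g 0 x0 := by
      have h := hasDerivAt_g hα hc (x := x0) (by rw [hz0])
      rw [hz0, Real.zero_rpow he0] at h
      simpa using h
    rw [hasDerivAt_iff_tendsto_slope, ← nhdsLT_sup_nhdsGT, Filter.tendsto_sup]
    constructor
    · -- left: slope of L agrees with slope of g
      have hgl : Filter.Tendsto (slope g x0) (nhdsWithin x0 (Set.Iio x0)) (nhds 0) :=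
        (hasDerivAt_iff_tendsto_slope.mp hgd).mono_left
          (nhdsWithin_mono _ (fun y hy => Set.mem_compl_singleton_iff.mpr (ne_of_lt hy)))
      apply hgl.congr'
      filter_upwards [self_mem_nhdsWithin] with y hy
      have hyle : y ≤ x0 := (Set.mem_Iio.mp hy).le
      have : lossLT α c y = g y := by
        simp only [lossLT]
        rw [if_pos hyle]
      simp [slope_def_field, hL0, hg0, this]
    · -- right: slope of L is 0
      apply Filter.Tendsto.congr' _ tendsto_const_nhds
      filter_upwards [self_mem_nhdsWithin] with y hy
      have : lossLT α c y = 0 := by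
        simp only [lossLT]
        rw [if_neg (not_le.mpr (Set.mem_Ioi.mp hy))]
      simp [slope_def_field, hL0, this]
  · -- the zero branch
    have hs : sigtron α c x = 1 := by
      simp [sigtron, hα1, hα.2, not_le.mpr hx]
    rw [hs, sub_self]
    have : HasDerivAt (fun _ : ℝ => (0:ℝ)) 0 x := hasDerivAt_const x 0
    apply this.congr_of_eventuallyEq
    filter_upwards [Ioi_mem_nhds hx] with y hy
    simp only [lossLT]
    rw [if_neg (not_le.mpr (Set.mem_Ioi.mp hy))]
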